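/- (Theorem 1) Let m ≥ 1, let 0 < a < τ, let C : ℝ^m → ℝ be continuous, and let w_f ∈ ℝ^m. Suppose C is point-symmetric about w_f on D(w_f, τ), i.e., C(w_f + v) = C(w_f − v) for all v ∈ ℝ^m with ‖v‖_∞ ≤ τ. Then the smoothed function C̄ (the average of C over the box of radius a under the Uniform Perturbation) has a critical point at w_f: every partial derivative of C̄ at w_f exists and equals zero. -/

import Mathlib

open MeasureTheory

noncomputable section

/-- The closed ℓ∞-box `D(w, ς)` of radius `ς` centered at `w`. -/
def box {m : ℕ} (w : Fin m → ℝ) (ς : ℝ) : Set (Fin m → ℝ) :=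
  {w' | ∀ i, |w' i - w i| ≤ ς}

/-- The smoothed function `C̄(w) = (2a)^{-m} ∫_{D(w,a)} C(w') dw'`. -/
def smoothed {m : ℕ} (a : ℝ) (C : (Fin m → ℝ) → ℝ) (w : Fin m → ℝ) : ℝ :=
  ((2 * a) ^ m)⁻¹ * ∫ w' in box w a, C w'

theorem smoothed_critical_point_of_symmetry
    {m : ℕ} (hm : 1 ≤ m) (a τ : ℝ) (ha : 0 < a) (haτ : a < τ)
    (C : (Fin m → ℝ) → ℝ) (hC : Continuous C)
    (w_f : Fin m → ℝ)
    (hsym : ∀ v : Fin m → ℝ, (∀ i, |v i| ≤ τ) → C (w_f + v) = C (w_f - v)) :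
    ∀ i : Fin m,
      HasDerivAt (fun t : ℝ => smoothed a C (Function.update w_f i t)) 0 (w_f i) := by
  obtain ⟨n, rfl⟩ : ∃ n, m = n + 1 := ⟨m - 1, by omega⟩
  intro i
  set b : ℝ := w_f i with hb
  set B' : Set (Fin n → ℝ) :=
    Set.univ.pi fun j => Set.Icc (w_f (i.succAbove j) - a) (w_f (i.succAbove j) + a) with hB'
  have hB'meas : MeasurableSet B' := MeasurableSet.univ_pi fun j => measurableSet_Icc
  have hB'cpt : IsCompact B' := isCompact_univ_pi fun j => isCompact_Icc
  have hgcont : Continuous fun p : ℝ × (Fin n → ℝ) => C (i.insertNth p.1 p.2) :=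
    hC.comp (Continuous.finInsertNth (A := fun _ : Fin (n+1) => ℝ) i continuous_fst continuous_snd)
  set F : ℝ → ℝ := fun s => ∫ y in B', C (i.insertNth s y) with hF
  have hFc : Continuous F := by
    refine continuous_parametric_integral_of_continuous
      (f := fun s (y : Fin n → ℝ) => C (i.insertNth s y)) ?_ hB'cpt
    exact hgcont
  have hFi : ∀ u v : ℝ, IntervalIntegrable F volume u v := fun u v =>
    hFc.intervalIntegrable u v
  -- Step 1 : Fubini
  have key : ∀ t : ℝ, (∫ w' in box (Function.update w_f i t) a, C w')
      = ∫ s in Set.Icc (t - a) (t + a), F s := by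
    intro t
    set e := MeasurableEquiv.piFinSuccAbove (fun _ : Fin (n+1) => ℝ) i with he
    have hpre : e ⁻¹' ((Set.Icc (t - a) (t + a)) ×ˢ B') = box (Function.update w_f i t) a := by
      ext x
      simp only [Set.mem_preimage, Set.mem_prod, Set.mem_Icc, hB', Set.mem_pi, Set.mem_univ,
        forall_true_left, he, MeasurableEquiv.piFinSuccAbove_apply, box, Set.mem_setOf_eq,
        Fin.insertNthEquiv_symm_apply, Fin.removeNth]
      constructor
      · rintro ⟨h1, h2⟩ k
        rcases eq_or_ne k i with rfl | hk
        · rw [Function.update_self, abs_le]; exact ⟨by linarith [h1.1], by linarith [h1.2]⟩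
        · obtain ⟨j, rfl⟩ := Fin.exists_succAbove_eq hk
          rw [Function.update_of_ne (Fin.succAbove_ne i j), abs_le]
          exact ⟨by linarith [(h2 j).1], by linarith [(h2 j).2]⟩
      · intro h
        refine ⟨?_, fun j => ?_⟩
        · have := h i; rw [Function.update_self, abs_le] at this
          exact ⟨by linarith [this.1], by linarith [this.2]⟩
        · have := h (i.succAbove j)
          rw [Function.update_of_ne (Fin.succAbove_ne i j), abs_le] at this
          exact ⟨by linarith [this.1], by linarith [this.2]⟩
    have hmp := volume_preserving_piFinSuccAbove (fun _ : Fin (n+1) => ℝ) i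
    have h1 := hmp.setIntegral_preimage_emb e.measurableEmbedding
      (fun p : ℝ × (Fin n → ℝ) => C (i.insertNth p.1 p.2))
      ((Set.Icc (t - a) (t + a)) ×ˢ B')
    have h2 : (fun x : Fin (n+1) → ℝ => C (i.insertNth (e x).1 (e x).2)) = C := by
      funext x
      simp only [he, MeasurableEquiv.piFinSuccAbove_apply, Fin.insertNthEquiv_symm_apply]
      rw [Fin.insertNth_self_removeNth]
    rw [hpre, h2] at h1
    rw [h1]
    have hint : IntegrableOn (fun p : ℝ × (Fin n → ℝ) => C (i.insertNth p.1 p.2))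
        ((Set.Icc (t - a) (t + a)) ×ˢ B') (volume.prod volume) :=
      hgcont.continuousOn.integrableOn_compact (isCompact_Icc.prod hB'cpt)
    rw [Measure.volume_eq_prod, setIntegral_prod _ hint]
  -- Step 2 : FTC setup
  set G : ℝ → ℝ := fun u => ∫ x in (b - a)..u, F x with hG
  have keyG : ∀ t : ℝ, smoothed a C (Function.update w_f i t) = ((2*a)^(n+1))⁻¹ * (G (t + a) - G (t - a)) := by
    intro t
    rw [smoothed, key t]
    congr 1
    rw [MeasureTheory.integral_Icc_eq_integral_Ioc,
      ← intervalIntegral.integral_of_le (by linarith : t - a ≤ t + a)]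
    have hadd := intervalIntegral.integral_add_adjacent_intervals
      (hFi (b - a) (t - a)) (hFi (t - a) (t + a))
    simp only [hG]
    linarith [hadd]
  have hGd : ∀ x : ℝ, HasDerivAt G (F x) x := fun x =>
    intervalIntegral.integral_hasDerivAt_right (hFi _ _)
      hFc.stronglyMeasurable.stronglyMeasurableAtFilter hFc.continuousAt
  -- Step 3 : symmetry F(b+a) = F(b-a)
  have hτ : a ≤ τ := haτ.le
  have hsymF : F (b + a) = F (b - a) := by
    set c' : Fin n → ℝ := fun j => 2 * w_f (i.succAbove j) with hc'
    have hptwise : ∀ y ∈ B', C (i.insertNth (b + a) y) = C (i.insertNth (b - a) (c' - y)) := by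
      intro y hy
      have hv : ∀ k, |((i.insertNth (b + a) y : Fin (n+1) → ℝ) - w_f) k| ≤ τ := by
        intro k
        rcases eq_or_ne k i with rfl | hk
        · simp only [Pi.sub_apply, Fin.insertNth_apply_same, ← hb]
          rw [show b + a - b = a from by ring, abs_of_pos ha]; exact hτ
        · obtain ⟨j, rfl⟩ := Fin.exists_succAbove_eq hk
          simp only [Pi.sub_apply, Fin.insertNth_apply_succAbove]
          have hyj := hy j (Set.mem_univ j)
          rw [Set.mem_Icc] at hyj
          rw [abs_le]; exact ⟨by linarith [hyj.1], by linarith [hyj.2]⟩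
      have hs := hsym _ hv
      rw [add_sub_cancel] at hs
      rw [hs]
      congr 1
      funext k
      rcases eq_or_ne k i with rfl | hk
      · simp only [Pi.sub_apply, Fin.insertNth_apply_same, ← hb]; ring
      · obtain ⟨j, rfl⟩ := Fin.exists_succAbove_eq hk
        simp only [Pi.sub_apply, Fin.insertNth_apply_succAbove, hc']; ring
    have hrefl : (fun y : Fin n → ℝ => c' - y) ⁻¹' B' = B' := by
      ext z
      simp only [Set.mem_preimage, hB', Set.mem_pi, Set.mem_univ, forall_true_left,
        Pi.sub_apply, Set.mem_Icc, hc']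
      constructor <;> intro h j <;> have := h j <;> constructor <;> linarith [this.1, this.2]
    have hmp := Measure.measurePreserving_sub_left (volume : Measure (Fin n → ℝ)) c'
    have hemb : MeasurableEmbedding (fun y : Fin n → ℝ => c' - y) :=
      (Homeomorph.subLeft c').measurableEmbedding
    have h2 := hmp.setIntegral_preimage_emb hemb (fun y => C (i.insertNth (b - a) y)) B'
    rw [hrefl] at h2
    calc F (b + a) = ∫ y in B', C (i.insertNth (b - a) (c' - y)) :=
          setIntegral_congr_fun hB'meas hptwise
      _ = ∫ y in B', C (i.insertNth (b - a) y) := h2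
      _ = F (b - a) := rfl
  -- Step 4 : assemble
  have h1 : HasDerivAt (fun t : ℝ => G (t + a)) (F (b + a)) b := by
    have := (hGd (b + a)).comp b ((hasDerivAt_id b).add_const a)
    simpa [Function.comp_def] using this
  have h2 : HasDerivAt (fun t : ℝ => G (t - a)) (F (b - a)) b := by
    have := (hGd (b - a)).comp b ((hasDerivAt_id b).sub_const a)
    simpa [Function.comp_def] using this
  have hfinal : HasDerivAt (fun t : ℝ => ((2*a)^(n+1))⁻¹ * (G (t + a) - G (t - a))) 0 b := by
    have h3 := (h1.sub h2).const_mul (((2*a)^(n+1))⁻¹)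
    rw [hsymF, sub_self, mul_zero] at h3
    exact h3
  have hfun : (fun t : ℝ => smoothed a C (Function.update w_f i t))
      = fun t : ℝ => ((2*a)^(n+1))⁻¹ * (G (t + a) - G (t - a)) := funext keyG
  rw [hfun]
  exact hfinal
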